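/- Let n ≥ 1 and a = (a_1,…,a_{n-1}) ∈ {0,1}^{n-1}, and let P_a ⊂ [0,1)^2 be the set of 2^n points ( t_n/2 + t_{n-1}/4 + ⋯ + t_1/2^n , b_1/2 + b_2/4 + ⋯ + b_n/2^n ) for (t_1,…,t_n) ∈ {0,1}^n, where b_k = t_k XOR a_k·(t_{k+1} XOR ⋯ XOR t_n) for k < n and b_n = t_n. Then ∑_{(z_1,z_2) ∈ P_a} z_1·z_2 = (n + h + 1)/8 + (1/8)(−n + 2^{n+1} − 4 + 2/2^n), where h = #{i : a_i = 0}. -/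
import Mathlib

open Finset

def bvec (n : ℕ) (a : Fin (n-1) → ZMod 2) (t : Fin n → ZMod 2) (k : Fin n) : ZMod 2 :=
  t k + (if h : (k : ℕ) < n - 1 then a ⟨k, h⟩ else 0) *
    ∑ i ∈ Finset.univ.filter (fun i : Fin n => k < i), t i

noncomputable def xcoord (n : ℕ) (t : Fin n → ZMod 2) : ℝ :=
  ∑ k : Fin n, ((t k).val : ℝ) / 2 ^ (n - (k : ℕ))

noncomputable def ycoord (n : ℕ) (a : Fin (n-1) → ZMod 2) (t : Fin n → ZMod 2) : ℝ :=
  ∑ k : Fin n, ((bvec n a t k).val : ℝ) / 2 ^ ((k : ℕ) + 1)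

noncomputable def chi2 (u : ZMod 2) : ℝ := (-1) ^ u.val

lemma zmod2_cases (u : ZMod 2) : u = 0 ∨ u = 1 := by revert u; decide

lemma chi2_zero : chi2 0 = 1 := by norm_num [chi2]
lemma chi2_one : chi2 1 = -1 := by norm_num [chi2, ZMod.val_one]

lemma chi2_add (u v : ZMod 2) : chi2 (u + v) = chi2 u * chi2 v := by
  rcases zmod2_cases u with h|h <;> rcases zmod2_cases v with h'|h' <;>
    subst h <;> subst h' <;>
    simp [chi2_zero, chi2_one, show (1 + 1 : ZMod 2) = 0 from rfl]

lemma chi2_sum {ι : Type*} (s : Finset ι) (g : ι → ZMod 2) :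
    chi2 (∑ i ∈ s, g i) = ∏ i ∈ s, chi2 (g i) := by
  induction s using Finset.cons_induction with
  | empty => simp [chi2_zero]
  | cons i s hi ih => simp [Finset.sum_cons, Finset.prod_cons, chi2_add, ih]

lemma val_eq (u : ZMod 2) : ((u.val : ℝ)) = (1 - chi2 u) / 2 := by
  rcases zmod2_cases u with h|h <;> subst h <;>
    simp [chi2_zero, chi2_one, ZMod.val_one]

lemma sum_univ_zmod2 (f : ZMod 2 → ℝ) : ∑ x : ZMod 2, f x = f 0 + f 1 := by
  have : (univ : Finset (ZMod 2)) = {0, 1} := by decide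
  rw [this]; simp

lemma sum_chi2_x (c : ZMod 2) : ∑ x : ZMod 2, chi2 (c * x) = if c = 0 then 2 else 0 := by
  rw [sum_univ_zmod2]
  rcases zmod2_cases c with h|h <;> subst h <;>
    simp [chi2_zero, chi2_one] <;> norm_num

lemma sum_chi2_linear (n : ℕ) (c : Fin n → ZMod 2) :
    ∑ t : Fin n → ZMod 2, chi2 (∑ m, c m * t m)
      = if ∀ m, c m = 0 then (2:ℝ)^n else 0 := by
  have h1 : ∀ t : Fin n → ZMod 2, chi2 (∑ m, c m * t m) = ∏ m, chi2 (c m * t m) := fun t =>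
    chi2_sum _ _
  simp only [h1]
  rw [← Fintype.piFinset_univ,
    ← Finset.prod_univ_sum (fun _ : Fin n => (univ : Finset (ZMod 2)))
      (fun m x => chi2 (c m * x))]
  have h2 : ∀ m : Fin n, (∑ x : ZMod 2, chi2 (c m * x)) = if c m = 0 then 2 else 0 :=
    fun m => sum_chi2_x (c m)
  simp only [h2]
  by_cases hc : ∀ m, c m = 0
  · simp [hc, Finset.prod_const]
  · push_neg at hc
    obtain ⟨m, hm⟩ := hc
    rw [if_neg (by push_neg; exact ⟨m, hm⟩), Finset.prod_eq_zero (Finset.mem_univ m)]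
    simp [hm]

def acoef (n : ℕ) (a : Fin (n-1) → ZMod 2) (j : Fin n) : ZMod 2 :=
  if h : (j : ℕ) < n - 1 then a ⟨j, h⟩ else 0

def cvec (n : ℕ) (a : Fin (n-1) → ZMod 2) (j : Fin n) (m : Fin n) : ZMod 2 :=
  if m = j then 1 else if j < m then acoef n a j else 0

lemma bvec_eq_sum (n : ℕ) (a : Fin (n-1) → ZMod 2) (t : Fin n → ZMod 2) (j : Fin n) :
    bvec n a t j = ∑ m, cvec n a j m * t m := by
  have h1 : ∀ m : Fin n, cvec n a j m * t m
      = (if m = j then t m else 0) + (if j < m then acoef n a j * t m else 0) := by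
    intro m
    unfold cvec
    by_cases h : m = j
    · subst h; simp [lt_irrefl]
    · by_cases h2 : j < m <;> simp [h, h2]
  rw [Finset.sum_congr rfl (fun m _ => h1 m), Finset.sum_add_distrib,
    Finset.sum_ite_eq' univ j t, ← Finset.sum_filter]
  rw [← Finset.mul_sum]
  simp [bvec, acoef]

lemma tk_eq_sum (n : ℕ) (t : Fin n → ZMod 2) (k : Fin n) :
    t k = ∑ m, (if m = k then (1 : ZMod 2) else 0) * t m := by
  simp [ite_mul, Finset.sum_ite_eq' univ k t]

lemma dvec_zero_iff (n : ℕ) (a : Fin (n-1) → ZMod 2) (k j : Fin n) :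
    (∀ m : Fin n, (if m = k then (1:ZMod 2) else 0) + cvec n a j m = 0)
      ↔ (k = j ∧ acoef n a j = 0) := by
  constructor
  · intro h
    have hkj : k = j := by
      by_contra hne
      rcases lt_or_gt_of_ne hne with hlt | hgt
      · have hk := h k
        simp [cvec, hne, asymm hlt] at hk
      · have hj := h j
        simp [cvec, (Ne.symm hne : j ≠ k)] at hj
    subst hkj
    refine ⟨rfl, ?_⟩
    by_contra hA
    have hj : (k:ℕ) < n - 1 := by
      by_contra h'
      simp [acoef, h'] at hA
    have hjn : (k:ℕ) + 1 < n := by omega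
    have hm := h ⟨(k:ℕ)+1, hjn⟩
    have hne : (⟨(k:ℕ)+1, hjn⟩ : Fin n) ≠ k := by
      intro hc
      have := congrArg Fin.val hc
      simp at this
    have hlt : k < (⟨(k:ℕ)+1, hjn⟩ : Fin n) := by
      simp [Fin.lt_def]
    simp [cvec, hne, hlt, hA] at hm
  · rintro ⟨rfl, hA⟩ m
    by_cases h1 : m = k
    · subst h1
      simp [cvec, show (1 + 1 : ZMod 2) = 0 from rfl]
    · by_cases h2 : k < m <;> simp [cvec, h1, h2, hA]

lemma Skj (n : ℕ) (a : Fin (n-1) → ZMod 2) (k j : Fin n) :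
    ∑ t : Fin n → ZMod 2, ((t k).val : ℝ) * ((bvec n a t j).val : ℝ)
      = ((2:ℝ)^n + (if k = j ∧ acoef n a j = 0 then (2:ℝ)^n else 0)) / 4 := by
  have hterm : ∀ t : Fin n → ZMod 2, ((t k).val : ℝ) * ((bvec n a t j).val : ℝ)
      = (1 - chi2 (t k) - chi2 (bvec n a t j) + chi2 (t k + bvec n a t j)) / 4 := by
    intro t
    rw [val_eq, val_eq, chi2_add]
    ring
  rw [Finset.sum_congr rfl (fun t _ => hterm t)]
  rw [← Finset.sum_div]
  have hcard : (Fintype.card (Fin n → ZMod 2) : ℝ) = 2 ^ n := by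
    simp [Fintype.card_fun]
  have h1 : ∑ t : Fin n → ZMod 2, (1:ℝ) = 2 ^ n := by
    rw [Finset.sum_const, Finset.card_univ, nsmul_eq_mul, mul_one, hcard]
  have h2 : ∑ t : Fin n → ZMod 2, chi2 (t k) = 0 := by
    have : ∀ t : Fin n → ZMod 2, chi2 (t k)
        = chi2 (∑ m, (if m = k then (1:ZMod 2) else 0) * t m) := by
      intro t; rw [← tk_eq_sum]
    rw [Finset.sum_congr rfl (fun t _ => this t), sum_chi2_linear]
    rw [if_neg]
    intro hc
    have := hc k
    simp at this
  have h3 : ∑ t : Fin n → ZMod 2, chi2 (bvec n a t j) = 0 := by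
    have : ∀ t : Fin n → ZMod 2, chi2 (bvec n a t j)
        = chi2 (∑ m, cvec n a j m * t m) := by
      intro t; rw [← bvec_eq_sum]
    rw [Finset.sum_congr rfl (fun t _ => this t), sum_chi2_linear]
    rw [if_neg]
    intro hc
    have := hc j
    simp [cvec] at this
  have h4 : ∑ t : Fin n → ZMod 2, chi2 (t k + bvec n a t j)
      = if k = j ∧ acoef n a j = 0 then (2:ℝ)^n else 0 := by
    have : ∀ t : Fin n → ZMod 2, chi2 (t k + bvec n a t j)
        = chi2 (∑ m, ((if m = k then (1:ZMod 2) else 0) + cvec n a j m) * t m) := by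
      intro t
      congr 1
      rw [tk_eq_sum n t k, bvec_eq_sum n a t j, ← Finset.sum_add_distrib]
      · exact Finset.sum_congr rfl (fun m _ => by rw [add_mul])
    rw [Finset.sum_congr rfl (fun t _ => this t), sum_chi2_linear]
    by_cases hC : k = j ∧ acoef n a j = 0
    · rw [if_pos ((dvec_zero_iff n a k j).2 hC), if_pos hC]
    · rw [if_neg (fun hall => hC ((dvec_zero_iff n a k j).1 hall)), if_neg hC]
  have := Finset.sum_add_distrib (s := (univ : Finset (Fin n → ZMod 2)))
    (f := fun t => 1 - chi2 (t k) - chi2 (bvec n a t j))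
    (g := fun t => chi2 (t k + bvec n a t j))
  rw [this, Finset.sum_sub_distrib, Finset.sum_sub_distrib, h1, h2, h3, h4]
  ring

lemma geo (N : ℕ) : ∑ k ∈ Finset.range N, (1:ℝ)/2^(k+1) = 1 - 1/2^N := by
  induction N with
  | zero => simp
  | succ N ih =>
    rw [Finset.sum_range_succ, ih]
    have h2 : (2:ℝ)^N ≠ 0 := by positivity
    field_simp
    ring

lemma T1 (n : ℕ) : ∑ k : Fin n, (1:ℝ)/2^(n - (k:ℕ)) = 1 - 1/2^n := by
  rw [Fin.sum_univ_eq_sum_range (fun k => (1:ℝ)/2^(n-k)) n, ← Finset.sum_range_reflect]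
  rw [← geo n]
  refine Finset.sum_congr rfl fun k hk => ?_
  have : n - (n - 1 - k) = k + 1 := by
    have := Finset.mem_range.1 hk; omega
  rw [this]

lemma T2 (n : ℕ) : ∑ j : Fin n, (1:ℝ)/2^((j:ℕ)+1) = 1 - 1/2^n := by
  rw [Fin.sum_univ_eq_sum_range (fun j => (1:ℝ)/2^(j+1)) n, geo]

lemma T3 (n : ℕ) (hn : 1 ≤ n) (a : Fin (n-1) → ZMod 2) :
    ∑ j : Fin n, (if acoef n a j = 0 then (1:ℝ) else 0)
      = ((Finset.univ.filter (fun i : Fin (n-1) => a i = 0)).card : ℝ) + 1 := by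
  obtain ⟨m, rfl⟩ : ∃ m, n = m + 1 := ⟨n - 1, by omega⟩
  rw [Fin.sum_univ_castSucc]
  have hlast : acoef (m+1) a (Fin.last m) = 0 := by simp [acoef]
  rw [hlast, if_pos rfl]
  have hcs : ∀ j : Fin (m+1-1), acoef (m+1) a (Fin.castSucc j) = a j := by
    intro j
    have hj : ((Fin.castSucc j : Fin (m+1)) : ℕ) < m + 1 - 1 := j.isLt
    rw [acoef, dif_pos hj]
    congr 1
  rw [Finset.sum_congr rfl fun j _ => by rw [hcs j]]
  rw [Finset.sum_boole]
  rfl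

theorem stmt3 (n : ℕ) (hn : 1 ≤ n) (a : Fin (n-1) → ZMod 2) :
    ∑ t : Fin n → ZMod 2, xcoord n t * ycoord n a t
      = ((n : ℝ) + ((Finset.univ.filter (fun i : Fin (n-1) => a i = 0)).card : ℝ) + 1) / 8
        + (1 / 8) * (-(n : ℝ) + 2 ^ (n + 1) - 4 + 2 / 2 ^ n) := by
  have hw : ∀ j : Fin n, (1:ℝ) / 2 ^ (n - (j:ℕ)) / 2 ^ ((j:ℕ)+1) = 1 / 2 ^ (n+1) := by
    intro j
    rw [div_div, ← pow_add]
    congr 2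
    have := j.isLt
    omega
  have key : ∀ t : Fin n → ZMod 2, xcoord n t * ycoord n a t
      = ∑ k : Fin n, ∑ j : Fin n,
          ((t k).val : ℝ) * ((bvec n a t j).val : ℝ)
            * (1 / 2 ^ (n - (k:ℕ)) / 2 ^ ((j:ℕ)+1)) := by
    intro t
    unfold xcoord ycoord
    rw [Finset.sum_mul_sum]
    exact Finset.sum_congr rfl fun k _ => Finset.sum_congr rfl fun j _ => by ring
  rw [Finset.sum_congr rfl fun t _ => key t, Finset.sum_comm]
  have swap2 : ∀ k : Fin n, (∑ t : Fin n → ZMod 2, ∑ j : Fin n,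
      ((t k).val : ℝ) * ((bvec n a t j).val : ℝ) * (1 / 2 ^ (n - (k:ℕ)) / 2 ^ ((j:ℕ)+1)))
      = ∑ j : Fin n, (∑ t : Fin n → ZMod 2, ((t k).val : ℝ) * ((bvec n a t j).val : ℝ))
          * (1 / 2 ^ (n - (k:ℕ)) / 2 ^ ((j:ℕ)+1)) := by
    intro k
    rw [Finset.sum_comm]
    exact Finset.sum_congr rfl fun j _ => by rw [Finset.sum_mul]
  rw [Finset.sum_congr rfl fun k _ => swap2 k]
  have split : ∀ k j : Fin n,
      (∑ t : Fin n → ZMod 2, ((t k).val : ℝ) * ((bvec n a t j).val : ℝ))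
          * (1 / 2 ^ (n - (k:ℕ)) / 2 ^ ((j:ℕ)+1))
      = ((2:ℝ)^n / 4 * (1 / 2 ^ (n - (k:ℕ)))) * (1 / 2 ^ ((j:ℕ)+1))
        + (if k = j then (if acoef n a j = 0 then (2:ℝ)^n / 4 * (1 / 2 ^ (n+1)) else 0) else 0) := by
    intro k j
    rw [Skj]
    by_cases hkj : k = j
    · subst hkj
      by_cases hA : acoef n a k = 0
      · rw [if_pos ⟨rfl, hA⟩, if_pos rfl, if_pos hA]
        have hp : (2:ℝ)^(n-(k:ℕ)) * 2^((k:ℕ)+1) = 2^(n+1) := by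
          rw [← pow_add]
          congr 1
          have := k.isLt
          omega
        have h1 : (1:ℝ)/2^(n-(k:ℕ)) * (1/2^((k:ℕ)+1)) = 1/2^(n+1) := by
          rw [div_mul_div_comm, one_mul, hp]
        rw [hw k, mul_assoc, h1]
        ring
      · rw [if_neg (fun h => hA h.2), if_pos rfl, if_neg hA]
        ring
    · rw [if_neg (fun h => hkj h.1), if_neg hkj]
      ring
  rw [Finset.sum_congr rfl fun k _ => Finset.sum_congr rfl fun j _ => split k j]
  rw [Finset.sum_congr rfl fun k _ => Finset.sum_add_distrib, Finset.sum_add_distrib]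
  rw [← Finset.sum_mul_sum]
  have diag : ∀ k : Fin n, (∑ j : Fin n,
      (if k = j then (if acoef n a j = 0 then (2:ℝ)^n / 4 * (1 / 2 ^ (n+1)) else 0) else 0))
      = (if acoef n a k = 0 then (2:ℝ)^n / 4 * (1 / 2 ^ (n+1)) else 0) := by
    intro k
    rw [Finset.sum_ite_eq]
    simp
  rw [Finset.sum_congr rfl fun k _ => diag k]
  have diag2 : ∀ k : Fin n, (if acoef n a k = 0 then (2:ℝ)^n / 4 * (1 / 2 ^ (n+1)) else 0)
      = (2:ℝ)^n / 4 * (1 / 2 ^ (n+1)) * (if acoef n a k = 0 then (1:ℝ) else 0) := by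
    intro k
    by_cases hA : acoef n a k = 0 <;> simp [hA]
  rw [Finset.sum_congr rfl fun k _ => diag2 k]
  rw [show (∑ k : Fin n, (2:ℝ)^n / 4 * (1 / 2 ^ (n+1)) * (if acoef n a k = 0 then (1:ℝ) else 0))
      = (2:ℝ)^n / 4 * (1 / 2 ^ (n+1)) * ∑ k : Fin n, (if acoef n a k = 0 then (1:ℝ) else 0)
      from (Finset.mul_sum _ _ _).symm]
  rw [T3 n hn a]
  have hmul : ∀ k : Fin n, (2:ℝ)^n / 4 * (1 / 2 ^ (n - (k:ℕ)))
      = (2:ℝ)^n / 4 * (1 / 2 ^ (n - (k:ℕ))) := fun _ => rfl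
  rw [show (∑ k : Fin n, (2:ℝ)^n / 4 * (1 / 2 ^ (n - (k:ℕ))))
      = (2:ℝ)^n / 4 * ∑ k : Fin n, (1:ℝ) / 2 ^ (n - (k:ℕ)) from (Finset.mul_sum _ _ _).symm]
  rw [T1 n, T2 n]
  have h2n : (2:ℝ)^n ≠ 0 := by positivity
  have hpow : (2:ℝ)^(n+1) = 2 * 2^n := by rw [pow_succ]; ring
  rw [hpow]
  field_simp
  ring
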